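/- For any Banach space X and r ∈ [0,1], the modulus of smoothness and the modulus of supporting smoothness satisfy ρ_X(r/2) ≤ λ⁺_X(r). -/

import Mathlib

noncomputable def suppLam {X : Type*} [NormedAddCommGroup X] [NormedSpace ℝ X]
    (x y : X) (r : ℝ) : ℝ := sInf {l : ℝ | ‖x + r • y - l • x‖ = 1}

/-- `y` is quasiorthogonal to `x`: some norming functional of `x` vanishes at `y`. -/
def Quasiorth {X : Type*} [NormedAddCommGroup X] [NormedSpace ℝ X] (x y : X) : Prop :=
  ∃ p : X →L[ℝ] ℝ, ‖p‖ = 1 ∧ p x = ‖x‖ ∧ p y = 0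

/-- Modulus of supporting convexity `λ⁻_X`. -/
noncomputable def suppConvexity (X : Type*) [NormedAddCommGroup X] [NormedSpace ℝ X]
    (r : ℝ) : ℝ :=
  sInf {v : ℝ | ∃ (x y : X) (t : ℝ), ‖x‖ = 1 ∧ ‖y‖ = 1 ∧ Quasiorth x y ∧
    0 ≤ t ∧ t ≤ r ∧ v = min (suppLam x y t) (suppLam x (-y) t)}

/-- Modulus of supporting smoothness `λ⁺_X`. -/
noncomputable def suppSmoothness (X : Type*) [NormedAddCommGroup X] [NormedSpace ℝ X]
    (r : ℝ) : ℝ :=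
  sSup {v : ℝ | ∃ (x y : X) (t : ℝ), ‖x‖ = 1 ∧ ‖y‖ = 1 ∧ Quasiorth x y ∧
    0 ≤ t ∧ t ≤ r ∧ v = max (suppLam x y t) (suppLam x (-y) t)}

/-- Modulus of convexity `δ_X`. -/
noncomputable def modConvexity (X : Type*) [NormedAddCommGroup X] [NormedSpace ℝ X]
    (ε : ℝ) : ℝ :=
  sInf {v : ℝ | ∃ x y : X, ‖x‖ ≤ 1 ∧ ‖y‖ ≤ 1 ∧ ε ≤ ‖x - y‖ ∧ v = 1 - ‖x + y‖ / 2}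

/-- Modulus of smoothness `ρ_X`. -/
noncomputable def modSmoothness (X : Type*) [NormedAddCommGroup X] [NormedSpace ℝ X]
    (τ : ℝ) : ℝ :=
  sSup {v : ℝ | ∃ x y : X, ‖x‖ = 1 ∧ ‖y‖ = τ ∧ v = ‖x + y‖ / 2 + ‖x - y‖ / 2 - 1}

/-- Banaś modulus `b_X`. -/
noncomputable def banasMod (X : Type*) [NormedAddCommGroup X] [NormedSpace ℝ X]
    (ε : ℝ) : ℝ :=
  sSup {v : ℝ | ∃ x y : X, ‖x‖ ≤ 1 ∧ ‖y‖ ≤ 1 ∧ ‖x - y‖ ≤ ε ∧ v = 1 - ‖x + y‖ / 2}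

open Set

private lemma dual_le {X : Type*} [NormedAddCommGroup X] [NormedSpace ℝ X]
    (p : X →L[ℝ] ℝ) (hp : ‖p‖ = 1) (v : X) : p v ≤ ‖v‖ := by
  have h := p.le_opNorm v
  rw [hp, one_mul, Real.norm_eq_abs] at h
  exact (le_abs_self _).trans h

private lemma suppLam_props {X : Type*} [NormedAddCommGroup X] [NormedSpace ℝ X]
    (x u : X) (p : X →L[ℝ] ℝ) (t : ℝ)
    (hx : ‖x‖ = 1) (hu : ‖u‖ = 1) (hp : ‖p‖ = 1) (hpx : p x = 1) (hpu : p u = 0)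
    (ht0 : 0 ≤ t) (ht1 : t ≤ 1) :
    0 ≤ suppLam x u t ∧ suppLam x u t ≤ 1 ∧ ‖x + t • u - suppLam x u t • x‖ = 1 := by
  have hcont : Continuous fun l : ℝ => ‖x + t • u - l • x‖ :=
    (continuous_const.sub (continuous_id.smul continuous_const)).norm
  have hpeval : ∀ l : ℝ, p (x + t • u - l • x) = 1 - l := by
    intro l
    rw [map_sub, map_add, map_smul, map_smul, smul_eq_mul, smul_eq_mul, hpx, hpu]
    ring
  have hmemK : ∀ l : ℝ, ‖x + t • u - l • x‖ = 1 → 0 ≤ l := by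
    intro l hl
    have h1 := dual_le p hp (x + t • u - l • x)
    rw [hpeval l, hl] at h1
    linarith
  have hg0 : 1 ≤ ‖x + t • u - (0:ℝ) • x‖ := by
    have h1 := dual_le p hp (x + t • u - (0:ℝ) • x)
    rw [hpeval 0] at h1
    linarith
  have hg1 : ‖x + t • u - (1:ℝ) • x‖ = t := by
    have he : x + t • u - (1:ℝ) • x = t • u := by module
    rw [he, norm_smul, hu, mul_one, Real.norm_eq_abs, abs_of_nonneg ht0]
  obtain ⟨l0, hl0mem, hl0⟩ := intermediate_value_Icc' zero_le_one hcont.continuousOn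
      (⟨by rw [hg1]; exact ht1, hg0⟩ : (1:ℝ) ∈ Icc ‖x + t • u - (1:ℝ) • x‖ ‖x + t • u - (0:ℝ) • x‖)
  set K := {l : ℝ | ‖x + t • u - l • x‖ = 1} with hK
  have hKne : K.Nonempty := ⟨l0, hl0⟩
  have hKbb : BddBelow K := ⟨0, fun l hl => hmemK l hl⟩
  have hKcl : IsClosed K := isClosed_eq hcont continuous_const
  have hmem : sInf K ∈ K := hKcl.csInf_mem hKne hKbb
  have hle : suppLam x u t ≤ 1 := le_trans (csInf_le hKbb hl0) hl0mem.2
  exact ⟨hmemK _ hmem, hle, hmem⟩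

/-- the defining set of `suppSmoothness`. -/
def SS (X : Type*) [NormedAddCommGroup X] [NormedSpace ℝ X] (r : ℝ) : Set ℝ :=
  {v : ℝ | ∃ (x y : X) (t : ℝ), ‖x‖ = 1 ∧ ‖y‖ = 1 ∧ Quasiorth x y ∧
    0 ≤ t ∧ t ≤ r ∧ v = max (suppLam x y t) (suppLam x (-y) t)}

private lemma mem_SS_bound {X : Type*} [NormedAddCommGroup X] [NormedSpace ℝ X]
    {r : ℝ} (hr1 : r ≤ 1) : ∀ v ∈ SS X r, 0 ≤ v ∧ v ≤ 1 := by
  rintro v ⟨x, y, t, hx, hy, ⟨p, hp, hpx, hpy⟩, ht0, htr, rfl⟩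
  have hpx1 : p x = 1 := by rw [hpx, hx]
  have h1 := suppLam_props x y p t hx hy hp hpx1 hpy ht0 (htr.trans hr1)
  have h2 := suppLam_props x (-y) p t hx (by rw [norm_neg, hy]) hp hpx1
    (by rw [map_neg, hpy, neg_zero]) ht0 (htr.trans hr1)
  exact ⟨le_max_of_le_left h1.1, max_le h1.2.1 h2.2.1⟩

noncomputable def suppSmoothness' (X : Type*) [NormedAddCommGroup X] [NormedSpace ℝ X]
    (r : ℝ) : ℝ := sSup (SS X r)

private lemma suppSmoothness_nonneg' {X : Type*} [NormedAddCommGroup X] [NormedSpace ℝ X]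
    {r : ℝ} (hr1 : r ≤ 1) : 0 ≤ suppSmoothness' X r := by
  rcases Set.eq_empty_or_nonempty (SS X r) with h | ⟨w, hw⟩
  · rw [suppSmoothness', h, Real.sSup_empty]
  · have hb := mem_SS_bound (X := X) hr1
    have hbdd : BddAbove (SS X r) := ⟨1, fun v hv => (hb v hv).2⟩
    exact le_trans (hb w hw).1 (le_csSup hbdd hw)

set_option maxHeartbeats 2000000 in
private lemma core {X : Type*} [NormedAddCommGroup X] [NormedSpace ℝ X]
    (r : ℝ) (hr0 : 0 < r) (hr1 : r ≤ 1) (x y : X) (p : X →L[ℝ] ℝ)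
    (hx : ‖x‖ = 1) (hy : ‖y‖ = r / 2) (hp : ‖p‖ = 1) (hpx : p x = 1) (hs0 : 0 ≤ p y) :
    ‖x + y‖ + ‖x - y‖ - 2 ≤ 2 * suppSmoothness' X r := by
  set s := p y with hs
  have hsτ : s ≤ r / 2 := by
    have h := dual_le p hp y
    rwa [hy] at h
  set z := y - s • x with hz
  have hpz : p z = 0 := by
    rw [hz, map_sub, map_smul, smul_eq_mul, hpx, mul_one, sub_self]
  by_cases hzero : z = 0
  · have hyx : y = s • x := by rwa [hz, sub_eq_zero] at hzero
    have h1 : ‖x + y‖ = 1 + s := by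
      rw [hyx]
      have he : x + s • x = (1 + s) • x := by module
      rw [he, norm_smul, hx, mul_one, Real.norm_eq_abs, abs_of_nonneg (by linarith)]
    have h2 : ‖x - y‖ = 1 - s := by
      rw [hyx]
      have he : x - s • x = (1 - s) • x := by module
      rw [he, norm_smul, hx, mul_one, Real.norm_eq_abs, abs_of_nonneg (by linarith)]
    have hnn := suppSmoothness_nonneg' (X := X) hr1
    rw [h1, h2]
    linarith
  · set c := ‖z‖ with hc
    have hcpos : 0 < c := norm_pos_iff.mpr hzero
    set u := c⁻¹ • z with hu'
    have hcu : c • u = z := by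
      rw [hu', smul_smul, mul_inv_cancel₀ hcpos.ne', one_smul]
    have hun : ‖u‖ = 1 := by
      rw [hu', norm_smul, Real.norm_eq_abs, abs_of_nonneg (inv_nonneg.mpr hcpos.le), ← hc,
        inv_mul_cancel₀ hcpos.ne']
    have hpu : p u = 0 := by
      rw [hu', map_smul, hpz, smul_eq_mul, mul_zero]
    have hcr : c ≤ r := by
      have h1 : c ≤ ‖y‖ + ‖s • x‖ := by rw [hc, hz]; exact norm_sub_le _ _
      rw [hy, norm_smul, hx, mul_one, Real.norm_eq_abs, abs_of_nonneg hs0] at h1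
      linarith
    have hL1 := suppLam_props x u p r hx hun hp hpx hpu hr0.le hr1
    have hL2 := suppLam_props x (-u) p r hx (by rw [norm_neg, hun]) hp hpx
      (by rw [map_neg, hpu, neg_zero]) hr0.le hr1
    set L1 := suppLam x u r with hL1d
    set L2 := suppLam x (-u) r with hL2d
    obtain ⟨hL1n, hL1l, hL1e⟩ := hL1
    obtain ⟨hL2n, hL2l, hL2e⟩ := hL2
    have hyd : y = s • x + c • u := by rw [hcu, hz]; module
    -- (E1)
    have hE1 : r * ‖x + y‖ ≤ r * (1 + s) + c * L1 := by
      have hβ : 0 ≤ r * (1 + s) - c * (1 - L1) := by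
        nlinarith [mul_nonneg hr0.le hs0, mul_nonneg hcpos.le hL1n]
      have hid1 : r • (x + y) = c • (x + r • u - L1 • x) + (r * (1 + s) - c * (1 - L1)) • x := by
        rw [hyd]; module
      calc r * ‖x + y‖ = ‖r • (x + y)‖ := by
            rw [norm_smul, Real.norm_eq_abs, abs_of_nonneg hr0.le]
        _ = ‖c • (x + r • u - L1 • x) + (r * (1 + s) - c * (1 - L1)) • x‖ := by rw [hid1]
        _ ≤ ‖c • (x + r • u - L1 • x)‖ + ‖(r * (1 + s) - c * (1 - L1)) • x‖ := norm_add_le _ _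
        _ = c * 1 + (r * (1 + s) - c * (1 - L1)) * 1 := by
            rw [norm_smul, norm_smul, hL1e, hx, Real.norm_eq_abs, Real.norm_eq_abs,
              abs_of_nonneg hcpos.le, abs_of_nonneg hβ]
        _ = r * (1 + s) + c * L1 := by ring
    have hxys : ‖x + y‖ ≤ 1 + s + L1 := by
      nlinarith [mul_le_mul_of_nonneg_right hcr hL1n]
    -- (E2)
    set b := ‖x - y‖ with hb
    have hbp : 1 - s ≤ b := by
      have h1 := dual_le p hp (x - y)
      rw [map_sub, hpx, ← hs] at h1
      exact h1
    have hrbc : c ≤ r * b := by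
      have hid2 : z = (-s) • (x - y) + (1 - s) • y := by rw [hz]; module
      have h1 : c ≤ s * b + (1 - s) * (r / 2) := by
        calc c = ‖(-s) • (x - y) + (1 - s) • y‖ := by rw [hc, hid2]
          _ ≤ ‖(-s) • (x - y)‖ + ‖(1 - s) • y‖ := norm_add_le _ _
          _ = s * b + (1 - s) * (r / 2) := by
              rw [norm_smul, norm_smul, hy, Real.norm_eq_abs, Real.norm_eq_abs, abs_neg,
                abs_of_nonneg hs0, abs_of_nonneg (by linarith)]
      nlinarith [mul_nonneg (by linarith : (0:ℝ) ≤ r - s) (by linarith : (0:ℝ) ≤ b - (1 - s)),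
        mul_nonneg (by linarith : (0:ℝ) ≤ 1 - s) (by linarith : (0:ℝ) ≤ r / 2 - s)]
    have hE2 : b ≤ 1 - s + L2 := by
      rcases le_or_gt b (1 - s) with h | h
      · linarith
      · have hxy0 : x - y ≠ 0 := by
          intro h0
          rw [hb, h0, norm_zero] at h
          linarith
        obtain ⟨q, hq, hqe⟩ := exists_dual_vector ℝ (x - y) (norm_ne_zero_iff.mpr hxy0)
        have hqe' : q (x - y) = b := by rw [hb]; simpa using hqe
        set a := q x with ha
        have ha1 : a ≤ 1 := by
          have h1 := dual_le q hq x
          rwa [hx] at h1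
        have hqy : q y = a - b := by
          rw [map_sub, ← ha] at hqe'
          linarith
        have hay : -q y ≤ r / 2 := by
          have h1 := dual_le q hq (-y)
          rwa [map_neg, norm_neg, hy] at h1
        have hapos : 0 < a := by
          by_contra hle
          push_neg at hle
          have hb2 : b ≤ r / 2 := by linarith [hqy, hay]
          linarith
        have hqz : q z = a - b - s * a := by
          rw [hz, map_sub, map_smul, hqy, smul_eq_mul, ← ha]
        have hqu : c * q u = a - b - s * a := by
          rw [hu', map_smul, smul_eq_mul, ← mul_assoc, mul_inv_cancel₀ hcpos.ne', one_mul, hqz]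
        have hdual : q (x + r • (-u) - L2 • x) ≤ 1 := by
          rw [← hL2e]
          exact dual_le q hq _
        have hdual' : a - r * q u - L2 * a ≤ 1 := by
          have he : q (x + r • (-u) - L2 • x) = a - r * q u - L2 * a := by
            rw [map_sub, map_add, map_smul, map_smul, map_neg, smul_eq_mul, smul_eq_mul, ← ha]
            ring
          linarith [hdual, he.symm.trans_le hdual]
        have hdc : c * a - r * (a - b - s * a) - L2 * a * c ≤ c := by
          have h1 := mul_le_mul_of_nonneg_left hdual' hcpos.le
          have h2 : c * (a - r * q u - L2 * a) = c * a - r * (c * q u) - L2 * a * c := by ring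
          rw [h2, hqu] at h1
          linarith
        have hP1 : 0 ≤ (1 - a) * (r * b - c) :=
          mul_nonneg (by linarith) (by linarith)
        have hP2 : 0 ≤ a * L2 * (r - c) :=
          mul_nonneg (mul_nonneg hapos.le hL2n) (by linarith)
        clear_value s z c u L1 L2 b a
        have hkey : 0 ≤ (a * r) * (1 - s + L2 - b) := by
          have hid : (a * r) * (1 - s + L2 - b) =
              (1 - a) * (r * b - c) + a * L2 * (r - c) +
                (c - (c * a - r * (a - b - s * a) - L2 * a * c)) := by ring
          rw [hid]
          linarith only [hP1, hP2, hdc]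
        have h0 : (a * r) * 0 ≤ (a * r) * (1 - s + L2 - b) := by
          rw [mul_zero]; exact hkey
        have h3 : (0:ℝ) ≤ 1 - s + L2 - b := le_of_mul_le_mul_left h0 (mul_pos hapos hr0)
        linarith
    -- assemble
    have hmem : max L1 L2 ∈ SS X r :=
      ⟨x, u, r, hx, hun, ⟨p, hp, by rw [hx]; exact hpx, hpu⟩, hr0.le, le_refl r, rfl⟩
    have hbdd : BddAbove (SS X r) := ⟨1, fun v hv => (mem_SS_bound (X := X) hr1 v hv).2⟩
    have hsup : max L1 L2 ≤ suppSmoothness' X r := le_csSup hbdd hmem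
    have hm1 : L1 ≤ max L1 L2 := le_max_left _ _
    have hm2 : L2 ≤ max L1 L2 := le_max_right _ _
    linarith

noncomputable def modSmoothness' (X : Type*) [NormedAddCommGroup X] [NormedSpace ℝ X]
    (τ : ℝ) : ℝ :=
  sSup {v : ℝ | ∃ x y : X, ‖x‖ = 1 ∧ ‖y‖ = τ ∧ v = ‖x + y‖ / 2 + ‖x - y‖ / 2 - 1}

theorem modSmoothness_le_suppSmoothness' {X : Type*} [NormedAddCommGroup X] [NormedSpace ℝ X]
    [CompleteSpace X] (r : ℝ) (hr0 : 0 ≤ r) (hr1 : r ≤ 1) :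
    modSmoothness' X (r / 2) ≤ suppSmoothness' X r := by
  have hnn : 0 ≤ suppSmoothness' X r := suppSmoothness_nonneg' hr1
  unfold modSmoothness'
  apply Real.sSup_le _ hnn
  rintro v ⟨x, y, hx, hy, rfl⟩
  rcases eq_or_lt_of_le hr0 with hr | hr
  · have hy0 : y = 0 := norm_eq_zero.mp (by rw [hy, ← hr]; norm_num)
    rw [hy0, add_zero, sub_zero, hx]
    linarith
  · have hx0 : x ≠ 0 := by intro h; rw [h, norm_zero] at hx; norm_num at hx
    obtain ⟨p, hp, hpx⟩ := exists_dual_vector ℝ x (norm_ne_zero_iff.mpr hx0)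
    have hpx1 : p x = 1 := by simpa [hx] using hpx
    rcases le_or_gt 0 (p y) with hsy | hsy
    · have h := core r hr hr1 x y p hx hy hp hpx1 hsy
      linarith
    · have h := core r hr hr1 x (-y) p hx (by rw [norm_neg, hy]) hp hpx1
        (by rw [map_neg]; linarith)
      rw [← sub_eq_add_neg, sub_neg_eq_add] at h
      linarith

theorem modSmoothness_le_suppSmoothness {X : Type*} [NormedAddCommGroup X] [NormedSpace ℝ X]
    [CompleteSpace X] (r : ℝ) (hr0 : 0 ≤ r) (hr1 : r ≤ 1) :
    modSmoothness X (r / 2) ≤ suppSmoothness X r := by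
  have h1 : modSmoothness X (r / 2) = modSmoothness' X (r / 2) := rfl
  have h2 : suppSmoothness X r = suppSmoothness' X r := rfl
  rw [h1, h2]
  exact modSmoothness_le_suppSmoothness' r hr0 hr1
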